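/- Assume ‖A‖₂ < 1. Then the IRLS iterates are uniformly bounded in ℓ¹-norm: for every n ≥ 1, ‖x^n‖₁ ≤ N · max_{k ∈ {1,…,N}} ( G(x¹, x¹, w¹, ε₁) / λ_k )^{1/q_k}. -/

import Mathlib

set_option maxHeartbeats 1000000

open Finset Filter Matrix Topology

/-- Squared Euclidean residual plus generalized sparsity penalty:
`F(x) = ‖Ax - b‖₂² + 2 ∑ₖ λₖ |xₖ|^{qₖ}`. -/
noncomputable def Ffun {M N : ℕ} (A : Matrix (Fin M) (Fin N) ℝ) (b : Fin M → ℝ)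
    (lam q : Fin N → ℝ) (x : Fin N → ℝ) : ℝ :=
  (∑ i, (A.mulVec x i - b i) ^ 2) + 2 * ∑ k, lam k * |x k| ^ (q k)

/-- The surrogate functional `G(x,a,w,ε)`. -/
noncomputable def Gfun {M N : ℕ} (A : Matrix (Fin M) (Fin N) ℝ) (b : Fin M → ℝ)
    (lam q : Fin N → ℝ) (x a w : Fin N → ℝ) (ε : ℝ) : ℝ :=
  (∑ i, (A.mulVec x i - b i) ^ 2) - (∑ i, (A.mulVec (x - a) i) ^ 2)
    + (∑ k, (x k - a k) ^ 2)
    + ∑ k ∈ Finset.univ.filter (fun k => 1 ≤ q k ∧ q k < 2),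
        lam k * (q k * w k * ((x k) ^ 2 + ε ^ 2)
          + (2 - q k) * (w k) ^ (q k / (q k - 2)))
    + ∑ k ∈ Finset.univ.filter (fun k => q k = 2),
        2 * lam k * ((x k) ^ 2 + ε ^ 2) * ((w k) ^ 2 - 2 * w k + 2)

/-- Euclidean (ℓ²) norm on `Fin N → ℝ`. -/
noncomputable def l2 {N : ℕ} (v : Fin N → ℝ) : ℝ :=
  Real.sqrt (∑ k, (v k) ^ 2)

/-- Spectral (ℓ² operator) norm of a matrix. -/
noncomputable def specNorm {M N : ℕ} (A : Matrix (Fin M) (Fin N) ℝ) : ℝ :=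
  ‖LinearMap.toContinuousLinearMap (Matrix.toEuclideanLin A)‖

/-! ### Auxiliary lemmas -/

/-- `J(x,ε) = ‖Ax-b‖² + 2 ∑ λₖ (xₖ² + ε²)^{qₖ/2}`, the value of `G` at the
canonical weights. -/
noncomputable def Jfun {M N : ℕ} (A : Matrix (Fin M) (Fin N) ℝ) (b : Fin M → ℝ)
    (lam q : Fin N → ℝ) (x : Fin N → ℝ) (ε : ℝ) : ℝ :=
  (∑ i, (A.mulVec x i - b i) ^ 2) + 2 * ∑ k, lam k * ((x k) ^ 2 + ε ^ 2) ^ (q k / 2)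

lemma spec_bound {M N : ℕ} (A : Matrix (Fin M) (Fin N) ℝ) (hA : specNorm A < 1)
    (v : Fin N → ℝ) : ∑ i, (A.mulVec v i) ^ 2 ≤ ∑ k, (v k) ^ 2 := by
  set L := LinearMap.toContinuousLinearMap (Matrix.toEuclideanLin A) with hL
  set v' : EuclideanSpace ℝ (Fin N) := (WithLp.equiv 2 _).symm v with hv'
  have h1 : L v' = (WithLp.equiv 2 (Fin M → ℝ)).symm (A.mulVec v) := by
    simp [hL, hv', Matrix.toEuclideanLin_apply_piLp_toLp]
  have h2 : ‖L v'‖ ≤ ‖v'‖ := by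
    calc ‖L v'‖ ≤ ‖L‖ * ‖v'‖ := L.le_opNorm v'
    _ ≤ 1 * ‖v'‖ := mul_le_mul_of_nonneg_right (le_of_lt hA) (norm_nonneg _)
    _ = ‖v'‖ := one_mul _
  have e1 : ‖L v'‖ ^ 2 = ∑ i, (A.mulVec v i) ^ 2 := by
    rw [h1, EuclideanSpace.norm_eq, Real.sq_sqrt (by positivity)]
    simp [sq_abs]
  have e2 : ‖v'‖ ^ 2 = ∑ k, (v k) ^ 2 := by
    rw [EuclideanSpace.norm_eq, Real.sq_sqrt (by positivity)]
    simp [hv', sq_abs]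
  rw [← e1, ← e2]
  exact pow_le_pow_left₀ (norm_nonneg _) h2 2

lemma Gfun_eq {M N : ℕ} (A : Matrix (Fin M) (Fin N) ℝ) (b : Fin M → ℝ)
    (lam q : Fin N → ℝ) (hq : ∀ k, 1 ≤ q k ∧ q k ≤ 2) (x a w : Fin N → ℝ) (ε : ℝ) :
    Gfun A b lam q x a w ε = (∑ i, (A.mulVec x i - b i) ^ 2)
      - (∑ i, (A.mulVec (x - a) i) ^ 2) + (∑ k, (x k - a k) ^ 2)
      + ∑ k, (if q k < 2 then
          lam k * (q k * w k * ((x k) ^ 2 + ε ^ 2)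
            + (2 - q k) * (w k) ^ (q k / (q k - 2)))
        else 2 * lam k * ((x k) ^ 2 + ε ^ 2) * ((w k) ^ 2 - 2 * w k + 2)) := by
  unfold Gfun
  rw [add_assoc, Finset.sum_filter, Finset.sum_filter, ← Finset.sum_add_distrib]
  congr 1
  apply Finset.sum_congr rfl
  intro k _
  by_cases h : q k < 2
  · have h2 : q k ≠ 2 := ne_of_lt h
    simp [h, h2, (hq k).1]
  · have h2 : q k = 2 := le_antisymm (hq k).2 (not_lt.mp h)
    simp [h, h2]

lemma amgm_pen (q w s : ℝ) (hw : 0 < w) (hs : 0 ≤ s) (hq1 : 1 ≤ q) (hq2 : q < 2) :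
    2 * s ^ (q / 2) ≤ q * w * s + (2 - q) * w ^ (q / (q - 2)) := by
  have hq0 : 0 < q := lt_of_lt_of_le one_pos hq1
  have h2q : 0 < 2 - q := by linarith
  have key := Real.geom_mean_le_arith_mean2_weighted
    (by positivity : (0:ℝ) ≤ q / 2) (by positivity : (0:ℝ) ≤ (2 - q) / 2)
    (by positivity : (0:ℝ) ≤ w * s) (le_of_lt (Real.rpow_pos_of_pos hw (q / (q - 2))))
    (by ring : q / 2 + (2 - q) / 2 = 1)
  have hgm : (w * s) ^ (q / 2) * (w ^ (q / (q - 2))) ^ ((2 - q) / 2) = s ^ (q / 2) := by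
    rw [Real.mul_rpow (le_of_lt hw) hs, ← Real.rpow_mul (le_of_lt hw)]
    have hne : q - 2 ≠ 0 := by linarith
    have h1 : q / (q - 2) * ((2 - q) / 2) = -(q / 2) := by
      field_simp
      ring
    rw [h1, mul_comm (w ^ (q/2)), mul_assoc, ← Real.rpow_add hw]
    simp
  rw [hgm] at key
  linarith

/-- Lower bound: `J(x,ε') ≤ G(x,x,w,ε)` for any positive weights `w` and
`0 ≤ ε' ≤ ε`. -/
lemma Jfun_le_Gfun {M N : ℕ} (A : Matrix (Fin M) (Fin N) ℝ) (b : Fin M → ℝ)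
    (lam q : Fin N → ℝ) (hlam : ∀ k, 0 < lam k) (hq : ∀ k, 1 ≤ q k ∧ q k ≤ 2)
    (x w : Fin N → ℝ) (hw : ∀ k, 0 < w k) (ε ε' : ℝ) (hε' : 0 ≤ ε') (hεε : ε' ≤ ε) :
    Jfun A b lam q x ε' ≤ Gfun A b lam q x x w ε := by
  rw [Gfun_eq A b lam q hq]
  have hz : (x - x : Fin N → ℝ) = 0 := sub_self x
  rw [hz]
  simp only [Matrix.mulVec_zero, Pi.zero_apply, ne_eq, OfNat.ofNat_ne_zero,
    not_false_eq_true, zero_pow, Finset.sum_const_zero, sub_zero, sub_self,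
    add_zero]
  unfold Jfun
  have hsum : ∀ k : Fin N, 2 * (lam k * ((x k) ^ 2 + ε' ^ 2) ^ (q k / 2)) ≤
      (if q k < 2 then
          lam k * (q k * w k * ((x k) ^ 2 + ε ^ 2)
            + (2 - q k) * (w k) ^ (q k / (q k - 2)))
        else 2 * lam k * ((x k) ^ 2 + ε ^ 2) * ((w k) ^ 2 - 2 * w k + 2)) := by
    intro k
    have hmono : ((x k) ^ 2 + ε' ^ 2) ^ (q k / 2) ≤ ((x k) ^ 2 + ε ^ 2) ^ (q k / 2) := by
      apply Real.rpow_le_rpow (by positivity) (by nlinarith) (by linarith [(hq k).1])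
    by_cases hk : q k < 2
    · rw [if_pos hk]
      have h1 := amgm_pen (q k) (w k) ((x k) ^ 2 + ε ^ 2) (hw k) (by positivity)
        (hq k).1 hk
      have := (hlam k).le
      calc 2 * (lam k * ((x k) ^ 2 + ε' ^ 2) ^ (q k / 2))
          ≤ 2 * (lam k * ((x k) ^ 2 + ε ^ 2) ^ (q k / 2)) := by
            apply mul_le_mul_of_nonneg_left (mul_le_mul_of_nonneg_left hmono this)
              (by norm_num)
        _ ≤ lam k * (q k * w k * ((x k) ^ 2 + ε ^ 2)
            + (2 - q k) * (w k) ^ (q k / (q k - 2))) := by nlinarith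
    · rw [if_neg hk]
      have hk2 : q k = 2 := le_antisymm (hq k).2 (not_lt.mp hk)
      have hr : ((x k) ^ 2 + ε' ^ 2) ^ (q k / 2) = (x k) ^ 2 + ε' ^ 2 := by
        rw [hk2]; norm_num
      rw [hr]
      have hwk := hw k
      have hl := hlam k
      have hD : (x k) ^ 2 + ε' ^ 2 ≤ (x k) ^ 2 + ε ^ 2 := by nlinarith
      have t1 : 0 ≤ lam k * (((x k) ^ 2 + ε ^ 2) * ((w k) ^ 2 - 2 * w k + 1)) :=
        mul_nonneg hl.le (mul_nonneg (by positivity)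
          (by nlinarith [sq_nonneg (w k - 1)]))
      have t2 : 0 ≤ lam k * (((x k) ^ 2 + ε ^ 2) - ((x k) ^ 2 + ε' ^ 2)) :=
        mul_nonneg hl.le (by linarith)
      nlinarith [t1, t2]
  calc (∑ i, (A.mulVec x i - b i) ^ 2) + 2 * ∑ k, lam k * ((x k) ^ 2 + ε' ^ 2) ^ (q k / 2)
      = (∑ i, (A.mulVec x i - b i) ^ 2)
        + ∑ k, 2 * (lam k * ((x k) ^ 2 + ε' ^ 2) ^ (q k / 2)) := by
        rw [Finset.mul_sum]
    _ ≤ _ := by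
        apply add_le_add_right (Finset.sum_le_sum fun k _ => hsum k)

/-- With the canonical weights, `G(x,x,w(x,ε),ε) = J(x,ε)`. -/
lemma Gfun_canon_le {M N : ℕ} (A : Matrix (Fin M) (Fin N) ℝ) (b : Fin M → ℝ)
    (lam q : Fin N → ℝ) (hq : ∀ k, 1 ≤ q k ∧ q k ≤ 2)
    (x w : Fin N → ℝ) (ε : ℝ) (hε : 0 < ε)
    (hwc : ∀ k, w k = ((x k) ^ 2 + ε ^ 2) ^ ((q k - 2) / 2)) :
    Gfun A b lam q x x w ε ≤ Jfun A b lam q x ε := by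
  rw [Gfun_eq A b lam q hq]
  have hz : (x - x : Fin N → ℝ) = 0 := sub_self x
  rw [hz]
  simp only [Matrix.mulVec_zero, Pi.zero_apply, ne_eq, OfNat.ofNat_ne_zero,
    not_false_eq_true, zero_pow, Finset.sum_const_zero, sub_zero, sub_self,
    add_zero]
  unfold Jfun
  rw [Finset.mul_sum]
  apply add_le_add_right
  apply Finset.sum_le_sum
  intro k _
  set s : ℝ := (x k) ^ 2 + ε ^ 2 with hsdef
  have hs : 0 < s := by positivity
  by_cases hk : q k < 2
  · rw [if_pos hk]
    have hne : q k - 2 ≠ 0 := by intro h; rw [sub_eq_zero] at h; exact absurd h (ne_of_lt hk)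
    have h1 : w k * s = s ^ (q k / 2) := by
      rw [hwc k, ← hsdef]
      nth_rewrite 2 [← Real.rpow_one s]
      rw [← Real.rpow_add hs]
      congr 1
      ring
    have h2 : (w k) ^ (q k / (q k - 2)) = s ^ (q k / 2) := by
      rw [hwc k, ← hsdef, ← Real.rpow_mul hs.le]
      congr 1
      field_simp
    have : lam k * (q k * w k * s + (2 - q k) * (w k) ^ (q k / (q k - 2)))
        = 2 * (lam k * s ^ (q k / 2)) := by
      rw [h2, mul_assoc (q k), h1]; ring
    rw [this]
  · rw [if_neg hk]
    have hk2 : q k = 2 := le_antisymm (hq k).2 (not_lt.mp hk)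
    have hw1 : w k = 1 := by
      rw [hwc k, hk2]
      norm_num
    have hr : s ^ (q k / 2) = s := by rw [hk2]; norm_num
    rw [hw1, hr]
    ring_nf
    nlinarith [hs]

/-- Setting `a = x` decreases `G` (uses `‖A‖₂ < 1`). -/
lemma Gfun_a_self {M N : ℕ} (A : Matrix (Fin M) (Fin N) ℝ) (hA : specNorm A < 1)
    (b : Fin M → ℝ) (lam q : Fin N → ℝ) (hq : ∀ k, 1 ≤ q k ∧ q k ≤ 2)
    (x a w : Fin N → ℝ) (ε : ℝ) :
    Gfun A b lam q x x w ε ≤ Gfun A b lam q x a w ε := by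
  rw [Gfun_eq A b lam q hq x x, Gfun_eq A b lam q hq x a]
  have hz : (x - x : Fin N → ℝ) = 0 := sub_self x
  rw [hz]
  simp only [Matrix.mulVec_zero, Pi.zero_apply, ne_eq, OfNat.ofNat_ne_zero,
    not_false_eq_true, zero_pow, Finset.sum_const_zero, sub_zero, sub_self,
    add_zero]
  have := spec_bound A hA (x - a)
  have hrw : ∀ k : Fin N, (x - a) k ^ 2 = (x k - a k) ^ 2 := fun k => rfl
  simp only [hrw] at this
  linarith

/-- The iterate minimizes `G(·,a,w,ε)`. -/
lemma Gfun_min {M N : ℕ} (A : Matrix (Fin M) (Fin N) ℝ) (b : Fin M → ℝ)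
    (lam q : Fin N → ℝ) (hlam : ∀ k, 0 < lam k) (hq : ∀ k, 1 ≤ q k ∧ q k ≤ 2)
    (x' a w : Fin N → ℝ) (hw : ∀ k, 0 < w k) (hw2 : ∀ k, q k = 2 → w k = 1)
    (hx' : ∀ k, x' k = (1 + lam k * q k * w k)⁻¹
        * (a k + Aᵀ.mulVec b k - Aᵀ.mulVec (A.mulVec a) k)) (ε : ℝ) :
    Gfun A b lam q x' a w ε ≤ Gfun A b lam q a a w ε := by
  rw [Gfun_eq A b lam q hq x' a, Gfun_eq A b lam q hq a a]
  have hz : (a - a : Fin N → ℝ) = 0 := sub_self a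
  rw [hz]
  simp only [Matrix.mulVec_zero, Pi.zero_apply, ne_eq, OfNat.ofNat_ne_zero,
    not_false_eq_true, zero_pow, Finset.sum_const_zero, sub_zero, sub_self,
    add_zero]
  -- expansion of the residual terms
  have hiden : ∀ i, (A.mulVec x' i - b i) ^ 2 - (A.mulVec (x' - a) i) ^ 2
      - (A.mulVec a i - b i) ^ 2
      = 2 * (A.mulVec (x' - a) i * (A.mulVec a i - b i)) := by
    intro i
    have hsub : A.mulVec (x' - a) i = A.mulVec x' i - A.mulVec a i := by
      rw [Matrix.mulVec_sub]; rfl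
    rw [hsub]; ring
  have hswap : ∀ (v u : Fin M → ℝ) (vv : Fin N → ℝ), True := fun _ _ _ => trivial
  have hdp : ∑ i, A.mulVec (x' - a) i * (A.mulVec a i - b i)
      = ∑ k, (x' k - a k) * (Aᵀ.mulVec (A.mulVec a) k - Aᵀ.mulVec b k) := by
    have h := Matrix.dotProduct_mulVec (fun i => A.mulVec a i - b i) A (x' - a)
    rw [← Matrix.mulVec_transpose] at h
    simp only [dotProduct] at h
    have hr : ∀ k, Aᵀ.mulVec (fun i => A.mulVec a i - b i) k
        = Aᵀ.mulVec (A.mulVec a) k - Aᵀ.mulVec b k := by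
      intro k
      have : (fun i => A.mulVec a i - b i) = A.mulVec a - b := rfl
      rw [this, Matrix.mulVec_sub]; rfl
    calc ∑ i, A.mulVec (x' - a) i * (A.mulVec a i - b i)
        = ∑ i, (A.mulVec a i - b i) * A.mulVec (x' - a) i := by
          apply Finset.sum_congr rfl; intro i _; ring
      _ = ∑ k, Aᵀ.mulVec (fun i => A.mulVec a i - b i) k * (x' - a) k := h
      _ = ∑ k, (x' k - a k) * (Aᵀ.mulVec (A.mulVec a) k - Aᵀ.mulVec b k) := by
          apply Finset.sum_congr rfl; intro k _
          rw [hr k]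
          have : (x' - a) k = x' k - a k := rfl
          rw [this]; ring
  -- per-coordinate inequality
  have hkey : ∀ k : Fin N,
      2 * ((x' k - a k) * (Aᵀ.mulVec (A.mulVec a) k - Aᵀ.mulVec b k))
        + (x' k - a k) ^ 2
        + ((if q k < 2 then
            lam k * (q k * w k * ((x' k) ^ 2 + ε ^ 2)
              + (2 - q k) * (w k) ^ (q k / (q k - 2)))
          else 2 * lam k * ((x' k) ^ 2 + ε ^ 2) * ((w k) ^ 2 - 2 * w k + 2))
          - (if q k < 2 then
            lam k * (q k * w k * ((a k) ^ 2 + ε ^ 2)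
              + (2 - q k) * (w k) ^ (q k / (q k - 2)))
          else 2 * lam k * ((a k) ^ 2 + ε ^ 2) * ((w k) ^ 2 - 2 * w k + 2))) ≤ 0 := by
    intro k
    have hc : 0 ≤ lam k * q k * w k := by
      have := (hlam k).le
      have h1 : (0:ℝ) ≤ q k := le_trans zero_le_one (hq k).1
      exact mul_nonneg (mul_nonneg (hlam k).le h1) (hw k).le
    have h1c : (0:ℝ) < 1 + lam k * q k * w k := by linarith
    have hx : x' k * (1 + lam k * q k * w k)
        = a k + Aᵀ.mulVec b k - Aᵀ.mulVec (A.mulVec a) k := by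
      rw [hx' k]
      field_simp
    have hg : Aᵀ.mulVec (A.mulVec a) k - Aᵀ.mulVec b k
        = a k - x' k * (1 + lam k * q k * w k) := by linarith
    rw [hg]
    by_cases hk : q k < 2
    · rw [if_pos hk, if_pos hk]
      nlinarith [mul_nonneg hc (sq_nonneg (x' k - a k)), sq_nonneg (x' k - a k)]
    · rw [if_neg hk, if_neg hk]
      have hk2 : q k = 2 := le_antisymm (hq k).2 (not_lt.mp hk)
      have hw1 : w k = 1 := hw2 k hk2
      rw [hk2, hw1]
      have hl := (hlam k).le
      nlinarith [mul_nonneg hl (sq_nonneg (x' k - a k)), sq_nonneg (x' k - a k)]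
  have hsumkey := Finset.sum_le_sum (fun k (_ : k ∈ Finset.univ) => hkey k)
  rw [Finset.sum_const_zero] at hsumkey
  have hsplit : ∑ k : Fin N,
      (2 * ((x' k - a k) * (Aᵀ.mulVec (A.mulVec a) k - Aᵀ.mulVec b k))
        + (x' k - a k) ^ 2
        + ((if q k < 2 then
            lam k * (q k * w k * ((x' k) ^ 2 + ε ^ 2)
              + (2 - q k) * (w k) ^ (q k / (q k - 2)))
          else 2 * lam k * ((x' k) ^ 2 + ε ^ 2) * ((w k) ^ 2 - 2 * w k + 2))
          - (if q k < 2 then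
            lam k * (q k * w k * ((a k) ^ 2 + ε ^ 2)
              + (2 - q k) * (w k) ^ (q k / (q k - 2)))
          else 2 * lam k * ((a k) ^ 2 + ε ^ 2) * ((w k) ^ 2 - 2 * w k + 2))))
      = 2 * (∑ k, (x' k - a k) * (Aᵀ.mulVec (A.mulVec a) k - Aᵀ.mulVec b k))
        + (∑ k, (x' k - a k) ^ 2)
        + ((∑ k, if q k < 2 then
            lam k * (q k * w k * ((x' k) ^ 2 + ε ^ 2)
              + (2 - q k) * (w k) ^ (q k / (q k - 2)))
          else 2 * lam k * ((x' k) ^ 2 + ε ^ 2) * ((w k) ^ 2 - 2 * w k + 2))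
          - (∑ k, if q k < 2 then
            lam k * (q k * w k * ((a k) ^ 2 + ε ^ 2)
              + (2 - q k) * (w k) ^ (q k / (q k - 2)))
          else 2 * lam k * ((a k) ^ 2 + ε ^ 2) * ((w k) ^ 2 - 2 * w k + 2))) := by
    rw [Finset.mul_sum, ← Finset.sum_sub_distrib, ← Finset.sum_add_distrib,
      ← Finset.sum_add_distrib]
  rw [hsplit] at hsumkey
  have hres : (∑ i, (A.mulVec x' i - b i) ^ 2) - (∑ i, (A.mulVec (x' - a) i) ^ 2)
      - (∑ i, (A.mulVec a i - b i) ^ 2)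
      = 2 * (∑ k, (x' k - a k) * (Aᵀ.mulVec (A.mulVec a) k - Aᵀ.mulVec b k)) := by
    rw [← hdp, Finset.mul_sum, ← Finset.sum_sub_distrib, ← Finset.sum_sub_distrib]
    apply Finset.sum_congr rfl
    intro i _
    have := hiden i
    linarith
  linarith

theorem stmt_10 {M N : ℕ} (A : Matrix (Fin M) (Fin N) ℝ) (hA : specNorm A < 1)
    (b : Fin M → ℝ) (lam q : Fin N → ℝ)
    (hlam : ∀ k, 0 < lam k) (hq : ∀ k, 1 ≤ q k ∧ q k ≤ 2)
    (x : ℕ → Fin N → ℝ) (eps : ℕ → ℝ) (w : ℕ → Fin N → ℝ)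
    (α : ℝ) (hα0 : 0 < α) (hα1 : α < 1) (heps0 : 0 < eps 0)
    (hw : ∀ n k, w n k = ((x n k) ^ 2 + (eps n) ^ 2) ^ ((q k - 2) / 2))
    (hxiter : ∀ n k, x (n + 1) k =
      (1 + lam k * q k * w n k)⁻¹
        * (x n k + Aᵀ.mulVec b k - Aᵀ.mulVec (A.mulVec (x n)) k))
    (hepsiter : ∀ n, eps (n + 1) =
      min (eps n) (Real.sqrt (l2 (x (n + 1) - x n) + α ^ (n + 1)))) :
    ∀ n : ℕ, 1 ≤ n →
      (∑ k, |x n k|)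
        ≤ (N : ℝ) *
          ⨆ k : Fin N,
            (Gfun A b lam q (x 1) (x 1) (w 1) (eps 1) / lam k) ^ (1 / q k) := by
  -- positivity of ε and of the weights
  have hepspos : ∀ n, 0 < eps n := by
    intro n
    induction n with
    | zero => exact heps0
    | succ n ih =>
        rw [hepsiter n]
        exact lt_min ih (Real.sqrt_pos.mpr
          (add_pos_of_nonneg_of_pos (Real.sqrt_nonneg _) (pow_pos hα0 _)))
  have hspos : ∀ n k, 0 < (x n k) ^ 2 + (eps n) ^ 2 := fun n k =>
    add_pos_of_nonneg_of_pos (sq_nonneg _) (pow_pos (hepspos n) 2)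
  have hwpos : ∀ n k, 0 < w n k := by
    intro n k
    rw [hw n k]
    exact Real.rpow_pos_of_pos (hspos n k) _
  have hw2 : ∀ n k, q k = 2 → w n k = 1 := by
    intro n k hk
    rw [hw n k, hk]
    norm_num
  set G1 : ℝ := Gfun A b lam q (x 1) (x 1) (w 1) (eps 1) with hG1def
  -- descent of the functional J
  have hdesc : ∀ n, 1 ≤ n → Jfun A b lam q (x n) (eps n) ≤ G1 := by
    intro n hn
    induction n, hn using Nat.le_induction with
    | base =>
        exact Jfun_le_Gfun A b lam q hlam hq (x 1) (w 1) (hwpos 1) (eps 1) (eps 1)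
          (hepspos 1).le le_rfl
    | succ n hn ih =>
        have heps1 : eps (n + 1) ≤ eps n := by rw [hepsiter n]; exact min_le_left _ _
        calc Jfun A b lam q (x (n + 1)) (eps (n + 1))
            ≤ Gfun A b lam q (x (n + 1)) (x (n + 1)) (w n) (eps n) :=
              Jfun_le_Gfun A b lam q hlam hq (x (n + 1)) (w n) (hwpos n) (eps n)
                (eps (n + 1)) (hepspos (n + 1)).le heps1
          _ ≤ Gfun A b lam q (x (n + 1)) (x n) (w n) (eps n) :=
              Gfun_a_self A hA b lam q hq _ _ _ _
          _ ≤ Gfun A b lam q (x n) (x n) (w n) (eps n) :=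
              Gfun_min A b lam q hlam hq (x (n + 1)) (x n) (w n) (hwpos n)
                (hw2 n) (hxiter n) (eps n)
          _ ≤ Jfun A b lam q (x n) (eps n) :=
              Gfun_canon_le A b lam q hq (x n) (w n) (eps n) (hepspos n) (hw n)
          _ ≤ G1 := ih
  -- G1 is nonnegative
  have hJnonneg : ∀ n, 0 ≤ Jfun A b lam q (x n) (eps n) := by
    intro n
    unfold Jfun
    have h1 : (0:ℝ) ≤ ∑ i, (A.mulVec (x n) i - b i) ^ 2 :=
      Finset.sum_nonneg fun i _ => sq_nonneg _
    have h2 : (0:ℝ) ≤ ∑ k, lam k * ((x n k) ^ 2 + (eps n) ^ 2) ^ (q k / 2) :=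
      Finset.sum_nonneg fun k _ => mul_nonneg (hlam k).le (Real.rpow_nonneg (hspos n k).le _)
    linarith
  have hG1 : 0 ≤ G1 := le_trans (hJnonneg 1) (hdesc 1 le_rfl)
  -- main bound
  intro n hn
  have hbound : ∀ k : Fin N, |x n k| ≤ (G1 / lam k) ^ (1 / q k) := by
    intro k
    have hq1 : 0 < q k := lt_of_lt_of_le one_pos (hq k).1
    -- λₖ |xₙₖ|^{qₖ} ≤ J(xₙ,εₙ) ≤ G1
    have h1 : lam k * |x n k| ^ (q k) ≤ G1 := by
      have ha : |x n k| ^ (q k) = ((x n k) ^ 2) ^ (q k / 2) := by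
        rw [← sq_abs, ← Real.rpow_natCast |x n k| 2, ← Real.rpow_mul (abs_nonneg _)]
        congr 1
        ring
      have hb : ((x n k) ^ 2) ^ (q k / 2) ≤ ((x n k) ^ 2 + (eps n) ^ 2) ^ (q k / 2) :=
        Real.rpow_le_rpow (sq_nonneg _) (by nlinarith [sq_nonneg (eps n)]) (by positivity)
      have hc : lam k * ((x n k) ^ 2 + (eps n) ^ 2) ^ (q k / 2)
          ≤ ∑ j, lam j * ((x n j) ^ 2 + (eps n) ^ 2) ^ (q j / 2) :=
        Finset.single_le_sum
          (f := fun j => lam j * ((x n j) ^ 2 + (eps n) ^ 2) ^ (q j / 2))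
          (fun j _ => mul_nonneg (hlam j).le (Real.rpow_nonneg (hspos n j).le _))
          (Finset.mem_univ k)
      have hd : 2 * ∑ j, lam j * ((x n j) ^ 2 + (eps n) ^ 2) ^ (q j / 2)
          ≤ Jfun A b lam q (x n) (eps n) := by
        unfold Jfun
        have := Finset.sum_nonneg (fun i (_ : i ∈ Finset.univ) =>
          sq_nonneg (A.mulVec (x n) i - b i))
        linarith
      have he := hdesc n hn
      have hc' : 0 ≤ lam k * ((x n k) ^ 2 + (eps n) ^ 2) ^ (q k / 2) :=
        mul_nonneg (hlam k).le (Real.rpow_nonneg (hspos n k).le _)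
      have h2' : lam k * |x n k| ^ (q k)
          ≤ lam k * ((x n k) ^ 2 + (eps n) ^ 2) ^ (q k / 2) := by
        rw [ha]
        exact mul_le_mul_of_nonneg_left hb (hlam k).le
      have hsum0 : 0 ≤ ∑ j, lam j * ((x n j) ^ 2 + (eps n) ^ 2) ^ (q j / 2) :=
        Finset.sum_nonneg fun j _ =>
          mul_nonneg (hlam j).le (Real.rpow_nonneg (hspos n j).le _)
      linarith [hc, hd, he, hc', h2', hsum0]
    have h2 : |x n k| ^ (q k) ≤ G1 / lam k := by
      rw [le_div_iff₀ (hlam k)]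
      linarith [h1]
    calc |x n k| = (|x n k| ^ (q k)) ^ (1 / q k) := by
          rw [← Real.rpow_mul (abs_nonneg _), mul_one_div, div_self (ne_of_gt hq1),
            Real.rpow_one]
      _ ≤ (G1 / lam k) ^ (1 / q k) :=
          Real.rpow_le_rpow (Real.rpow_nonneg (abs_nonneg _) _) h2 (by positivity)
  rcases Nat.eq_zero_or_pos N with h0 | h0
  · subst h0
    simp
  · haveI : Nonempty (Fin N) := Fin.pos_iff_nonempty.mp h0
    have hbdd : BddAbove (Set.range fun k : Fin N => (G1 / lam k) ^ (1 / q k)) :=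
      Set.Finite.bddAbove (Set.finite_range _)
    calc (∑ k, |x n k|)
        ≤ ∑ _k : Fin N, ⨆ j : Fin N, (G1 / lam j) ^ (1 / q j) :=
          Finset.sum_le_sum fun k _ => le_trans (hbound k) (le_ciSup hbdd k)
      _ = (N : ℝ) * ⨆ j : Fin N, (G1 / lam j) ^ (1 / q j) := by
          rw [Finset.sum_const, Finset.card_univ, Fintype.card_fin, nsmul_eq_mul]
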